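/- (Squared norm of the traceless second fundamental form.) Let m ≥ 3, let R = (R_ij) be symmetric with S = R_tt, let f satisfy the adapted-frame condition with w ≠ 0, and suppose the pointwise gradient Einstein-type equation holds with β ≠ 0. Define h_ab = −H_ab / w for a, b ∈ {1,…,m−1} and h = (1/(m−1)) Σ_a h_aa. Then Σ_{a,b} (h_ab − h δ_ab)² = (α²/(β² w²)) [ Σ_{i,j} (R_ij)² − 2 Σ_a (R_am)² − (m/(m−1)) (R_mm)² − S²/(m−1) + (2/(m−1)) S R_mm ]. -/

import Mathlib

open Finset

/-- Kronecker delta. -/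
noncomputable def kdelta {m : ℕ} (i j : Fin m) : ℝ := if i = j then 1 else 0

/-- squared norm of the traceless second fundamental form of a regular
level set, in an adapted frame, under the pointwise gradient Einstein-type equation
with `β ≠ 0`. Here `e` is the distinguished last index and lowercase indices range
over the complement of `e` (i.e. `{1,…,m−1}`). -/
theorem traceless_second_fundamental_form_norm_sq (m : ℕ) (hm : 3 ≤ m)
    (R H : Fin m → Fin m → ℝ)
    (hR : ∀ i j, R i j = R j i) (hHsymm : ∀ i j, H i j = H j i)
    (f : Fin m → ℝ) (e : Fin m) (w : ℝ) (hw : w ≠ 0)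
    (hfa : ∀ a, a ≠ e → f a = 0) (hfe : f e = w)
    (α β μ ρ lam : ℝ) (hβ : β ≠ 0)
    (heq : ∀ i j, α * R i j + β * H i j + μ * f i * f j
      = (ρ * (∑ t, R t t) + lam) * kdelta i j)
    (h : Fin m → Fin m → ℝ) (hdef : ∀ a b, h a b = - H a b / w)
    (hmean : ℝ)
    (hmeandef : hmean = (1 / ((m : ℝ) - 1)) * ∑ a ∈ Finset.univ.erase e, h a a) :
    ∑ a ∈ Finset.univ.erase e, ∑ b ∈ Finset.univ.erase e,
        (h a b - hmean * kdelta a b) ^ 2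
      = (α ^ 2 / (β ^ 2 * w ^ 2)) *
          ((∑ i, ∑ j, (R i j) ^ 2)
            - 2 * ∑ a ∈ Finset.univ.erase e, (R a e) ^ 2
            - ((m : ℝ) / ((m : ℝ) - 1)) * (R e e) ^ 2
            - (∑ t, R t t) ^ 2 / ((m : ℝ) - 1)
            + (2 / ((m : ℝ) - 1)) * (∑ t, R t t) * R e e) := by
  have hm1 : ((m : ℝ) - 1) ≠ 0 := by
    have : (3:ℝ) ≤ (m:ℝ) := by exact_mod_cast hm
    linarith
  have hbw : β * w ≠ 0 := mul_ne_zero hβ hw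
  set S : ℝ := ∑ t, R t t with hS
  set k : ℝ := α / (β * w) with hk
  set c : ℝ := (ρ * S + lam) / (β * w) with hc
  set r : ℝ := (1 / ((m:ℝ) - 1)) * ∑ a ∈ Finset.univ.erase e, R a a with hr
  -- formula for h on the hyperplane
  have hab : ∀ a ∈ Finset.univ.erase e, ∀ b ∈ Finset.univ.erase e,
      h a b = k * R a b - c * kdelta a b := by
    intro a ha b hb
    have ha' : a ≠ e := (Finset.mem_erase.mp ha).1
    have hKey := heq a b
    rw [hfa a ha'] at hKey
    rw [hdef, hk, hc]
    field_simp
    linear_combination (-1) * hKey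
  -- cardinality fact
  have hcardR : ((Finset.univ.erase e).card : ℝ) = (m:ℝ) - 1 := by
    rw [Finset.card_erase_of_mem (Finset.mem_univ e), Finset.card_univ, Fintype.card_fin]
    have : 1 ≤ m := by omega
    push_cast [this]
    ring
  -- hmean formula
  have hmeanval : hmean = k * r - c := by
    rw [hmeandef, hr]
    rw [Finset.sum_congr rfl (fun a ha => hab a ha a ha)]
    rw [Finset.sum_sub_distrib]
    have hk1 : ∑ a ∈ Finset.univ.erase e, c * kdelta a a
        = ((m:ℝ) - 1) * c := by
      have : ∀ a ∈ Finset.univ.erase e, c * kdelta a a = c := by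
        intro a ha; simp [kdelta]
      rw [Finset.sum_congr rfl this, Finset.sum_const, nsmul_eq_mul, hcardR]
    rw [hk1, ← Finset.mul_sum]
    field_simp
  have hpt : ∀ a ∈ Finset.univ.erase e, ∀ b ∈ Finset.univ.erase e,
      (h a b - hmean * kdelta a b) ^ 2
        = k^2 * (R a b)^2 - 2 * k^2 * r * (R a b * kdelta a b) + k^2 * r^2 * kdelta a b := by
    intro a ha b hb
    rw [hab a ha b hb, hmeanval]
    have hd : kdelta a b = 0 ∨ kdelta a b = 1 := by
      unfold kdelta; split <;> simp
    rcases hd with hd | hd <;> rw [hd] <;> ring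
  -- diagonal sums
  have hdiag : ∀ a ∈ Finset.univ.erase e,
      ∑ b ∈ Finset.univ.erase e, R a b * kdelta a b = R a a := by
    intro a ha
    simp [kdelta, mul_ite, Finset.sum_ite_eq, ha]
  have hdel : ∀ a ∈ Finset.univ.erase e,
      ∑ b ∈ Finset.univ.erase e, kdelta a b = 1 := by
    intro a ha
    simp [kdelta, Finset.sum_ite_eq, ha]
  -- expand the double sum
  have hrow : ∀ a ∈ Finset.univ.erase e,
      ∑ b ∈ Finset.univ.erase e,
        (k^2 * (R a b)^2 - 2 * k^2 * r * (R a b * kdelta a b) + k^2 * r^2 * kdelta a b)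
      = k^2 * (∑ b ∈ Finset.univ.erase e, (R a b)^2) - 2 * k^2 * r * R a a + k^2 * r^2 := by
    intro a ha
    rw [Finset.sum_add_distrib, Finset.sum_sub_distrib, ← Finset.mul_sum, ← Finset.mul_sum,
      ← Finset.mul_sum, hdiag a ha, hdel a ha, mul_one]
  rw [Finset.sum_congr rfl (fun a ha => Finset.sum_congr rfl (fun b hb => hpt a ha b hb))]
  rw [Finset.sum_congr rfl hrow]
  rw [Finset.sum_add_distrib, Finset.sum_sub_distrib, ← Finset.mul_sum, ← Finset.mul_sum,
    Finset.sum_const, nsmul_eq_mul, hcardR]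
  -- decompose total sums
  have hSdec : S = (∑ a ∈ Finset.univ.erase e, R a a) + R e e := by
    rw [hS, ← Finset.sum_erase_add _ _ (Finset.mem_univ e)]
  have hrowdec : ∀ a, (∑ j, (R a j)^2) = (∑ b ∈ Finset.univ.erase e, (R a b)^2) + (R a e)^2 := by
    intro a
    rw [← Finset.sum_erase_add _ _ (Finset.mem_univ e)]
  have htot : (∑ i, ∑ j, (R i j)^2)
      = (∑ a ∈ Finset.univ.erase e, ∑ b ∈ Finset.univ.erase e, (R a b)^2)
        + 2 * (∑ a ∈ Finset.univ.erase e, (R a e)^2) + (R e e)^2 := by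
    rw [← Finset.sum_erase_add _ _ (Finset.mem_univ e)]
    rw [Finset.sum_congr rfl (fun a _ => hrowdec a), hrowdec e]
    rw [Finset.sum_add_distrib]
    have : ∑ b ∈ Finset.univ.erase e, (R e b)^2 = ∑ b ∈ Finset.univ.erase e, (R b e)^2 := by
      exact Finset.sum_congr rfl (fun b _ => by rw [hR e b])
    rw [this]
    ring
  rw [htot]
  have hdiagval : (∑ a ∈ Finset.univ.erase e, R a a) = S - R e e := by
    rw [hSdec]; ring
  rw [hdiagval, hr, hdiagval, hk]
  field_simp
  ring
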